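/- Let S be a finite multiset of pairwise coprime integers, each at least 2, such that ∑_{r ∈ S} (r − 1/r) < 24 and the cardinality of S is not equal to 4. Then B(S) ≤ 2401 < 2489. -/

import Mathlib

/-- `B S` for a finite multiset `S` of positive integers:
`lcm(S) * (24 - ∑_{r ∈ S} (r - 1/r))`, computed in `ℚ`. -/
def B (S : Multiset ℕ) : ℚ :=
  (S.lcm : ℚ) * (24 - (S.map (fun r => (r : ℚ) - 1 / r)).sum)

lemma key3 (a b c : ℕ) (ha : 2 ≤ a) (h1 : a < b) (h2 : b < c)
    (cab : Nat.Coprime a b) (cac : Nat.Coprime a c) (cbc : Nat.Coprime b c) :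
    10 ≤ a + b + c := by
  by_cases hc : 5 ≤ c
  · omega
  · have ha' : a ≤ 2 := by omega
    have hb' : b ≤ 3 := by omega
    have hc' : c ≤ 4 := by omega
    interval_cases a <;> interval_cases b <;> interval_cases c <;> revert cab cac cbc <;> decide

lemma key4 (a b c d : ℕ) (ha : 2 ≤ a) (h1 : a < b) (h2 : b < c) (h3 : c < d)
    (cab : Nat.Coprime a b) (cac : Nat.Coprime a c) (cad : Nat.Coprime a d)
    (cbc : Nat.Coprime b c) (cbd : Nat.Coprime b d) (ccd : Nat.Coprime c d) :
    17 ≤ a + b + c + d := by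
  by_cases hd : 7 ≤ d
  · have := key3 a b c ha h1 h2 cab cac cbc; omega
  · have ha' : a ≤ 3 := by omega
    have hb' : b ≤ 4 := by omega
    have hc' : c ≤ 5 := by omega
    have hd' : d ≤ 6 := by omega
    interval_cases a <;> interval_cases b <;> interval_cases c <;> interval_cases d <;>
      revert cab cac cad cbc cbd ccd <;> decide

lemma key5 (a b c d e : ℕ) (ha : 2 ≤ a) (h1 : a < b) (h2 : b < c) (h3 : c < d) (h4 : d < e)
    (cab : Nat.Coprime a b) (cac : Nat.Coprime a c) (cad : Nat.Coprime a d) (cae : Nat.Coprime a e)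
    (cbc : Nat.Coprime b c) (cbd : Nat.Coprime b d) (cbe : Nat.Coprime b e)
    (ccd : Nat.Coprime c d) (cce : Nat.Coprime c e) (cde : Nat.Coprime d e) :
    28 ≤ a + b + c + d + e := by
  by_cases he : 11 ≤ e
  · have := key4 a b c d ha h1 h2 h3 cab cac cad cbc cbd ccd; omega
  · have ha' : a ≤ 6 := by omega
    have hb' : b ≤ 7 := by omega
    have hc' : c ≤ 8 := by omega
    have hd' : d ≤ 9 := by omega
    have he' : e ≤ 10 := by omega
    interval_cases a <;> interval_cases b <;> interval_cases c <;> interval_cases d <;>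
      interval_cases e <;> revert cab cac cad cae cbc cbd cbe ccd cce cde <;> decide

lemma amgm3 (x y z : ℚ) (hx : 0 ≤ x) (hy : 0 ≤ y) (hz : 0 ≤ z) :
    27 * (x*y*z) ≤ (x+y+z)^3 := by
  nlinarith [sq_nonneg (x-y), sq_nonneg (y-z), sq_nonneg (x-z), sq_nonneg (x+y+z),
    mul_nonneg hx hy, mul_nonneg hy hz, mul_nonneg hx hz,
    mul_nonneg (mul_nonneg hx hy) hz,
    mul_nonneg (sq_nonneg (x-y)) hz, mul_nonneg (sq_nonneg (y-z)) hx, mul_nonneg (sq_nonneg (x-z)) hy]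

lemma quart (s : ℚ) (h0 : 6 ≤ s) (h1 : s ≤ 24) : s^3*(24-s)/27 + s^2/3 ≤ 2401 := by
  nlinarith [sq_nonneg (s-18), mul_nonneg (sq_nonneg (s-18)) (by linarith : (0:ℚ) ≤ s),
    mul_nonneg (mul_nonneg (by linarith : (0:ℚ) ≤ s) (by linarith : (0:ℚ) ≤ s)) (by linarith : (0:ℚ) ≤ 24 - s),
    sq_nonneg (s*(s-18)), mul_nonneg (sq_nonneg (s-18)) (by linarith : (0:ℚ) ≤ 24 - s)]

lemma cube_bound (x y z : ℚ) (hx : 2 ≤ x) (hy : 2 ≤ y) (hz : 2 ≤ z) (hs : x + y + z < 51/2) :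
    x*y*z*(24 - x - y - z) + (x*y + y*z + z*x) ≤ 2401 := by
  have hx0 : (0:ℚ) ≤ x := by linarith
  have hy0 : (0:ℚ) ≤ y := by linarith
  have hz0 : (0:ℚ) ≤ z := by linarith
  have hsym : x*y + y*z + z*x ≤ (x+y+z)^2/3 := by
    nlinarith [sq_nonneg (x-y), sq_nonneg (y-z), sq_nonneg (x-z)]
  rcases le_or_gt (x+y+z) 24 with h24 | h24
  · have hag := amgm3 x y z hx0 hy0 hz0
    have hq := quart (x+y+z) (by linarith) h24
    have h1 : x*y*z*(24 - x - y - z) ≤ (x+y+z)^3*(24-(x+y+z))/27 := by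
      rw [le_div_iff₀ (by norm_num : (0:ℚ) < 27)]
      calc x*y*z*(24 - x - y - z) * 27 = 27*(x*y*z) * (24 - (x+y+z)) := by ring
        _ ≤ (x+y+z)^3 * (24 - (x+y+z)) := mul_le_mul_of_nonneg_right hag (by linarith)
    linarith
  · have hxy : 4 ≤ x*y := by nlinarith
    have h8 : 8 ≤ x*y*z := by
      calc (8:ℚ) = 4*2 := by norm_num
        _ ≤ (x*y)*z := mul_le_mul hxy hz (by norm_num) (by linarith)
    have hneg : x*y*z*(24 - x - y - z) ≤ 0 :=
      mul_nonpos_of_nonneg_of_nonpos (by linarith) (by linarith)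
    nlinarith [hsym]

lemma lt_of_cop (a b : ℕ) (ha : 2 ≤ a) (hab : a ≤ b) (h : Nat.Coprime a b) : a < b := by
  rcases eq_or_lt_of_le hab with rfl | h'
  · have := (Nat.coprime_self a).mp h; omega
  · exact h'

lemma inv_le_half (x : ℕ) (hx : 2 ≤ x) : ((x:ℚ))⁻¹ ≤ 1/2 := by
  have hxQ : (2:ℚ) ≤ x := by exact_mod_cast hx
  have := one_div_le_one_div_of_le (by norm_num : (0:ℚ) < 2) hxQ
  simpa [one_div] using this

theorem stmt_17 (S : Multiset ℕ) (h2 : ∀ x ∈ S, 2 ≤ x)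
    (hcop : S.Pairwise Nat.Coprime)
    (hsum : (S.map (fun r => (r : ℚ) - 1 / r)).sum < 24)
    (hcard : Multiset.card S ≠ 4) :
    B S ≤ 2401 ∧ (2401 : ℚ) < 2489 := by
  refine ⟨?_, by norm_num⟩
  obtain ⟨l, hsort, rfl⟩ : ∃ l : List ℕ, l.Pairwise (· ≤ ·) ∧ (l : Multiset ℕ) = S :=
    ⟨S.sort (· ≤ ·), S.pairwise_sort _, S.sort_eq _⟩
  have hcop' : l.Pairwise Nat.Coprime :=
    (Multiset.pairwise_coe_iff_pairwise).mp hcop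
  have h2' : ∀ x ∈ l, 2 ≤ x := fun x hx => h2 x (by simpa using hx)
  match l, hsort, hcop', h2', hsum, hcard with
  | [], _, _, _, _, _ => norm_num [B]
  | [a], _, _, h2', hsum, _ =>
    have ha2 : 2 ≤ a := h2' a (by simp)
    have ha : (2:ℚ) ≤ a := by exact_mod_cast ha2
    have ha0 : (a:ℚ) ≠ 0 := by linarith
    have h1 : (a:ℚ) * (a:ℚ)⁻¹ = 1 := by field_simp
    have hB : B ↑[a] = (a:ℚ) * (24 - ((a:ℚ) - (a:ℚ)⁻¹)) := by simp [B]
    rw [hB]; nlinarith [sq_nonneg ((a:ℚ) - 12)]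
  | [a, b], _, hcop', h2', hsum, _ =>
    have ha2 : 2 ≤ a := h2' a (by simp)
    have hb2 : 2 ≤ b := h2' b (by simp)
    have ha : (2:ℚ) ≤ a := by exact_mod_cast ha2
    have hb : (2:ℚ) ≤ b := by exact_mod_cast hb2
    have ha0 : (a:ℚ) ≠ 0 := by linarith
    have hb0 : (b:ℚ) ≠ 0 := by linarith
    have hra : (a:ℚ)⁻¹ ≤ 1/2 := inv_le_half a ha2
    have hrb : (b:ℚ)⁻¹ ≤ 1/2 := inv_le_half b hb2
    simp at hsum
    have hl2 : (↑[a,b] : Multiset ℕ).lcm = lcm a b := by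
      rw [show (↑[a,b] : Multiset ℕ).lcm = lcm a (lcm b 1) from rfl]; simp
    have hB : B ↑[a,b] = ((lcm a b : ℕ) : ℚ) * (24 - ((a:ℚ) - (a:ℚ)⁻¹ + ((b:ℚ) - (b:ℚ)⁻¹))) := by
      simp [B, hl2]
    set R : ℚ := 24 - ((a:ℚ) - (a:ℚ)⁻¹ + ((b:ℚ) - (b:ℚ)⁻¹)) with hR
    have hRpos : 0 < R := by rw [hR]; linarith
    have hlcm : ((lcm a b : ℕ) : ℚ) ≤ (a:ℚ) * b := by
      have h1 : lcm a b ≤ a * b :=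
        Nat.le_of_dvd (Nat.mul_pos (by omega) (by omega))
          (lcm_dvd (dvd_mul_right a b) (dvd_mul_left b a))
      calc ((lcm a b : ℕ) : ℚ) ≤ ((a*b : ℕ) : ℚ) := by exact_mod_cast h1
        _ = (a:ℚ)*b := by push_cast; ring
    have hkey : (a:ℚ)*b*R = (a:ℚ)*b*(24 - a - b) + a + b := by
      rw [hR]; field_simp; ring
    calc B ↑[a,b] = ((lcm a b : ℕ) : ℚ) * R := hB
      _ ≤ (a:ℚ)*b*R := mul_le_mul_of_nonneg_right hlcm hRpos.le
      _ = (a:ℚ)*b*(24 - a - b) + a + b := hkey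
      _ ≤ 2401 := by
          nlinarith [sq_nonneg ((a:ℚ) - b), sq_nonneg ((a:ℚ) + b - 16),
            mul_nonneg (sq_nonneg ((a:ℚ) - b)) (by linarith : (0:ℚ) ≤ 25 - a - b)]
  | [a, b, c], _, hcop', h2', hsum, _ =>
    have ha2 : 2 ≤ a := h2' a (by simp)
    have hb2 : 2 ≤ b := h2' b (by simp)
    have hc2 : 2 ≤ c := h2' c (by simp)
    have ha : (2:ℚ) ≤ a := by exact_mod_cast ha2
    have hb : (2:ℚ) ≤ b := by exact_mod_cast hb2
    have hc : (2:ℚ) ≤ c := by exact_mod_cast hc2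
    have ha0 : (a:ℚ) ≠ 0 := by linarith
    have hb0 : (b:ℚ) ≠ 0 := by linarith
    have hc0 : (c:ℚ) ≠ 0 := by linarith
    have hra : (a:ℚ)⁻¹ ≤ 1/2 := inv_le_half a ha2
    have hrb : (b:ℚ)⁻¹ ≤ 1/2 := inv_le_half b hb2
    have hrc : (c:ℚ)⁻¹ ≤ 1/2 := inv_le_half c hc2
    simp at hsum
    have hl3 : (↑[a,b,c] : Multiset ℕ).lcm = lcm a (lcm b c) := by
      rw [show (↑[a,b,c] : Multiset ℕ).lcm = lcm a (lcm b (lcm c 1)) from rfl]; simp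
    have hB : B ↑[a,b,c]
        = ((lcm a (lcm b c) : ℕ) : ℚ) * (24 - ((a:ℚ) - (a:ℚ)⁻¹ + ((b:ℚ) - (b:ℚ)⁻¹ + ((c:ℚ) - (c:ℚ)⁻¹)))) := by
      simp [B, hl3]
    set R : ℚ := 24 - ((a:ℚ) - (a:ℚ)⁻¹ + ((b:ℚ) - (b:ℚ)⁻¹ + ((c:ℚ) - (c:ℚ)⁻¹))) with hR
    have hRpos : 0 < R := by rw [hR]; linarith
    have hlcm : ((lcm a (lcm b c) : ℕ) : ℚ) ≤ (a:ℚ) * b * c := by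
      have hbc : lcm b c ∣ b * c := lcm_dvd (dvd_mul_right b c) (dvd_mul_left c b)
      have h1 : lcm a (lcm b c) ∣ a * (b * c) :=
        lcm_dvd (dvd_mul_right a (b*c)) (hbc.trans (dvd_mul_left (b*c) a))
      have hle : lcm a (lcm b c) ≤ a * (b * c) :=
        Nat.le_of_dvd (Nat.mul_pos (by omega) (Nat.mul_pos (by omega) (by omega))) h1
      calc ((lcm a (lcm b c) : ℕ) : ℚ) ≤ ((a*(b*c) : ℕ) : ℚ) := by exact_mod_cast hle
        _ = (a:ℚ)*b*c := by push_cast; ring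
    have hkey : (a:ℚ)*b*c*R = (a:ℚ)*b*c*(24 - a - b - c) + ((a:ℚ)*b + b*c + c*a) := by
      rw [hR]; field_simp; ring
    calc B ↑[a,b,c] = ((lcm a (lcm b c) : ℕ) : ℚ) * R := hB
      _ ≤ (a:ℚ)*b*c*R := mul_le_mul_of_nonneg_right hlcm hRpos.le
      _ = (a:ℚ)*b*c*(24 - a - b - c) + ((a:ℚ)*b + b*c + c*a) := hkey
      _ ≤ 2401 := cube_bound _ _ _ ha hb hc (by linarith)
  | [a, b, c, d], _, _, _, _, hcard => simp at hcard
  | a :: b :: c :: d :: e :: rest, hsort, hcop', h2', hsum, _ =>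
    absurd hsum
    simp only [not_lt]
    obtain ⟨hle1, hsort1⟩ := List.pairwise_cons.mp hsort
    obtain ⟨hle2, hsort2⟩ := List.pairwise_cons.mp hsort1
    obtain ⟨hle3, hsort3⟩ := List.pairwise_cons.mp hsort2
    obtain ⟨hle4, _⟩ := List.pairwise_cons.mp hsort3
    obtain ⟨hcp1, hcop1⟩ := List.pairwise_cons.mp hcop'
    obtain ⟨hcp2, hcop2⟩ := List.pairwise_cons.mp hcop1
    obtain ⟨hcp3, hcop3⟩ := List.pairwise_cons.mp hcop2
    obtain ⟨hcp4, _⟩ := List.pairwise_cons.mp hcop3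
    have ha2 : 2 ≤ a := h2' a (by simp)
    have hb2 : 2 ≤ b := h2' b (by simp)
    have hc2 : 2 ≤ c := h2' c (by simp)
    have hd2 : 2 ≤ d := h2' d (by simp)
    have he2 : 2 ≤ e := h2' e (by simp)
    have cab := hcp1 b (by simp)
    have cac := hcp1 c (by simp)
    have cad := hcp1 d (by simp)
    have cae := hcp1 e (by simp)
    have cbc := hcp2 c (by simp)
    have cbd := hcp2 d (by simp)
    have cbe := hcp2 e (by simp)
    have ccd := hcp3 d (by simp)
    have cce := hcp3 e (by simp)
    have cde := hcp4 e (by simp)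
    have hab : a < b := lt_of_cop a b ha2 (hle1 b (by simp)) cab
    have hbc : b < c := lt_of_cop b c hb2 (hle2 c (by simp)) cbc
    have hcd : c < d := lt_of_cop c d hc2 (hle3 d (by simp)) ccd
    have hde : d < e := lt_of_cop d e hd2 (hle4 e (by simp)) cde
    have h28 : 28 ≤ a + b + c + d + e :=
      key5 a b c d e ha2 hab hbc hcd hde cab cac cad cae cbc cbd cbe ccd cce cde
    have h28Q : (28:ℚ) ≤ (a:ℚ) + b + c + d + e := by exact_mod_cast h28
    have hinv : ∀ x : ℕ, 2 ≤ x → (x:ℚ)⁻¹ ≤ 1/2 := fun x hx => inv_le_half x hx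
    have hrest : 0 ≤ (List.map ((fun x : ℚ => x - x⁻¹) ∘ Nat.cast) rest).sum := by
      apply List.sum_nonneg
      intro q hq
      obtain ⟨x, hx, rfl⟩ := List.mem_map.mp hq
      have hx2 : 2 ≤ x := h2' x (by simp [hx])
      have hxQ : (2:ℚ) ≤ x := by exact_mod_cast hx2
      have := hinv x hx2
      simp only [Function.comp_apply]
      linarith
    have hia := hinv a ha2
    have hib := hinv b hb2
    have hic := hinv c hc2
    have hid := hinv d hd2
    have hie := hinv e he2
    simp
    linarith
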